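/- arXiv:2004.01292 — 2 statements merged into one kernel-verified Lean document; each statement's English description precedes it below -/
import Mathlib

section
/- Let $\zeta_\phi(x) = K_\phi(\sqrt{x})/x^{\phi/2}$ for $x > 0$. Then for every natural number $k$, the $k$-th derivative satisfies $\zeta_\phi^{(k)}(x) = (-\tfrac{1}{2})^k\, K_{\phi+k}(\sqrt{x})/x^{(\phi+k)/2}$ for all $x > 0$. -/
open MeasureTheory Real Set

noncomputable def besselK (l t : ℝ) : ℝ :=
  (1/2) * ∫ u in Set.Ioi (0:ℝ), u ^ (l - 1) * Real.exp (-(t/2) * (u + u⁻¹))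

noncomputable def gig (a b l : ℝ) (x : ℝ) : ℝ :=
  (a/b) ^ (l/2) / (2 * besselK l (Real.sqrt (a*b))) * x ^ (l - 1) *
    Real.exp (-(a*x + b/x)/2)

/-- Auxiliary: the rescaled Bessel integral. -/
noncomputable def myGG (l x : ℝ) : ℝ :=
  (1/2) * ∫ w in Set.Ioi (0:ℝ), w ^ (l - 1) * Real.exp (-(x*w + w⁻¹)/2)

lemma my_aemeas (l c : ℝ) :
    AEStronglyMeasurable (fun w : ℝ => w ^ (l-1) * Real.exp (-(c*w + w⁻¹)/2))
      (volume.restrict (Set.Ioi (0:ℝ))) := by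
  apply ContinuousOn.aestronglyMeasurable _ measurableSet_Ioi
  apply ContinuousOn.mul
  · exact continuousOn_id.rpow_const fun x hx => Or.inl (ne_of_gt hx)
  · apply Real.continuous_exp.comp_continuousOn
    apply ContinuousOn.div_const
    apply ContinuousOn.neg
    exact (continuousOn_const.mul continuousOn_id).add
      (continuousOn_id.inv₀ fun x hx => ne_of_gt hx)

lemma my_integK (l c : ℝ) (hc : 0 < c) :
    IntegrableOn (fun w : ℝ => w ^ (l-1) * Real.exp (-(c*w + w⁻¹)/2)) (Set.Ioi (0:ℝ)) := by
  set m : ℝ := |l - 1| with hm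
  have hm1 : l - 1 ≤ m := le_abs_self _
  have hmneg : (-1:ℝ) < m := lt_of_lt_of_le (by norm_num) (abs_nonneg _)
  set n : ℕ := ⌈m - (l-1)⌉₊ with hn
  have hn1 : m - (l-1) ≤ (n:ℝ) := Nat.le_ceil _
  set C : ℝ := max 1 ((n.factorial : ℝ) * 2 ^ n) with hC
  have hC1 : (1:ℝ) ≤ C := le_max_left _ _
  have hC2 : (n.factorial : ℝ) * 2 ^ n ≤ C := le_max_right _ _
  have key : ∀ w : ℝ, 0 < w → w ^ (l-1) * Real.exp (-w⁻¹/2) ≤ C * w ^ m := by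
    intro w hw
    rcases le_or_gt 1 w with h1 | h1
    · calc w ^ (l-1) * Real.exp (-w⁻¹/2) ≤ w ^ (l-1) * 1 := by
            apply mul_le_mul_of_nonneg_left _ (Real.rpow_nonneg hw.le _)
            have hwi : (0:ℝ) ≤ w⁻¹ := inv_nonneg.mpr hw.le
            exact Real.exp_le_one_iff.mpr (by linarith)
      _ = w ^ (l-1) := mul_one _
      _ ≤ w ^ m := Real.rpow_le_rpow_of_exponent_le h1 hm1
      _ ≤ C * w ^ m := le_mul_of_one_le_left (Real.rpow_nonneg hw.le _) hC1
    · have ht : (0:ℝ) < w⁻¹/2 := by positivity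
      have hfac : (0:ℝ) < (n.factorial : ℝ) := by positivity
      have hpow : (0:ℝ) < (w⁻¹/2) ^ n := pow_pos ht n
      have h2 := Real.pow_div_factorial_le_exp (w⁻¹/2) ht.le n
      have hexp : Real.exp (-(w⁻¹/2)) ≤ (n.factorial : ℝ) * (2*w) ^ n := by
        have hstep : Real.exp (-(w⁻¹/2)) ≤ ((w⁻¹/2) ^ n / n.factorial)⁻¹ := by
          rw [Real.exp_neg]
          exact inv_anti₀ (by positivity) h2
        refine hstep.trans_eq ?_
        rw [inv_div, div_eq_mul_inv, ← inv_pow,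
          show (w⁻¹/2)⁻¹ = 2*w by field_simp]
      calc w ^ (l-1) * Real.exp (-w⁻¹/2)
          ≤ w ^ (l-1) * ((n.factorial : ℝ) * (2*w) ^ n) := by
            apply mul_le_mul_of_nonneg_left _ (Real.rpow_nonneg hw.le _)
            rw [show -w⁻¹/2 = -(w⁻¹/2) by ring]
            exact hexp
        _ = ((n.factorial : ℝ) * 2 ^ n) * (w ^ (l-1) * w ^ (n:ℝ)) := by
            rw [mul_pow, ← Real.rpow_natCast w n]; ring
        _ = ((n.factorial : ℝ) * 2 ^ n) * w ^ (l-1 + n) := by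
            rw [← Real.rpow_add hw]
        _ ≤ ((n.factorial : ℝ) * 2 ^ n) * w ^ m := by
            apply mul_le_mul_of_nonneg_left _ (by positivity)
            exact Real.rpow_le_rpow_of_exponent_ge hw h1.le (by linarith)
        _ ≤ C * w ^ m := by
            apply mul_le_mul_of_nonneg_right hC2 (Real.rpow_nonneg hw.le _)
  -- dominating function
  have hdom : IntegrableOn (fun w : ℝ => C * (w ^ m * Real.exp (-(c/2) * w))) (Set.Ioi (0:ℝ)) := by
    have := integrableOn_rpow_mul_exp_neg_mul_rpow (p := 1) (s := m) (b := c/2)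
      hmneg one_pos (by positivity)
    simp only [Real.rpow_one] at this
    exact this.const_mul C
  apply Integrable.mono' hdom (my_aemeas l c)
  rw [ae_restrict_iff' measurableSet_Ioi]
  apply Filter.Eventually.of_forall
  intro w hw
  rw [Set.mem_Ioi] at hw
  rw [Real.norm_eq_abs, abs_of_nonneg (by positivity)]
  have : Real.exp (-(c*w + w⁻¹)/2) = Real.exp (-(c/2)*w) * Real.exp (-w⁻¹/2) := by
    rw [← Real.exp_add]; ring_nf
  rw [this]
  calc w ^ (l-1) * (Real.exp (-(c/2)*w) * Real.exp (-w⁻¹/2))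
      = (w ^ (l-1) * Real.exp (-w⁻¹/2)) * Real.exp (-(c/2)*w) := by ring
    _ ≤ (C * w ^ m) * Real.exp (-(c/2)*w) := by
        apply mul_le_mul_of_nonneg_right (key w hw) (Real.exp_nonneg _)
    _ = C * (w ^ m * Real.exp (-(c/2)*w)) := by ring

/-- Change of variables: `besselK l (√x) = x^(l/2) * myGG l x`. -/
lemma my_besselK_eq (l x : ℝ) (hx : 0 < x) :
    besselK l (Real.sqrt x) = x ^ (l/2) * myGG l x := by
  have hs : 0 < Real.sqrt x := Real.sqrt_pos.mpr hx
  have h1 : (∫ u in Set.Ioi (0:ℝ), u ^ (l-1) * Real.exp (-(Real.sqrt x/2) * (u + u⁻¹)))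
      = Real.sqrt x * ∫ w in Set.Ioi (0:ℝ),
        (Real.sqrt x * w) ^ (l-1) * Real.exp (-(Real.sqrt x/2) * (Real.sqrt x * w + (Real.sqrt x * w)⁻¹)) := by
    rw [MeasureTheory.integral_comp_mul_left_Ioi
      (fun u => u ^ (l-1) * Real.exp (-(Real.sqrt x/2) * (u + u⁻¹))) 0 hs]
    rw [mul_zero, smul_eq_mul, ← mul_assoc, mul_inv_cancel₀ (ne_of_gt hs), one_mul]
  have h2 : ∀ w ∈ Set.Ioi (0:ℝ),
      (Real.sqrt x * w) ^ (l-1) * Real.exp (-(Real.sqrt x/2) * (Real.sqrt x * w + (Real.sqrt x * w)⁻¹))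
        = Real.sqrt x ^ (l-1) * (w ^ (l-1) * Real.exp (-(x*w + w⁻¹)/2)) := by
    intro w hw
    rw [Set.mem_Ioi] at hw
    rw [Real.mul_rpow hs.le hw.le]
    have hxx : Real.sqrt x * Real.sqrt x = x := Real.mul_self_sqrt hx.le
    have hne : Real.sqrt x ≠ 0 := ne_of_gt hs
    have : -(Real.sqrt x/2) * (Real.sqrt x * w + (Real.sqrt x * w)⁻¹) = -(x*w + w⁻¹)/2 := by
      calc -(Real.sqrt x/2) * (Real.sqrt x * w + (Real.sqrt x * w)⁻¹)
          = -((Real.sqrt x * Real.sqrt x)*w + (Real.sqrt x * (Real.sqrt x)⁻¹) * w⁻¹)/2 := by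
            rw [mul_inv]; ring
        _ = -(x*w + w⁻¹)/2 := by rw [hxx, mul_inv_cancel₀ hne, one_mul]
    rw [this]; ring
  rw [besselK, h1, MeasureTheory.setIntegral_congr_fun measurableSet_Ioi h2,
    MeasureTheory.integral_const_mul, myGG]
  have h3 : Real.sqrt x * Real.sqrt x ^ (l-1) = x ^ (l/2) := by
    rw [Real.sqrt_eq_rpow, ← Real.rpow_mul hx.le, ← Real.rpow_add hx]
    congr 1; ring
  rw [← h3]; ring

lemma my_gg_eq (l x : ℝ) (hx : 0 < x) :
    myGG l x = besselK l (Real.sqrt x) / x ^ (l/2) := by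
  rw [my_besselK_eq l x hx]
  field_simp

/-- Derivative under the integral sign. -/
lemma my_hasDerivAt_gg (l x : ℝ) (hx : 0 < x) :
    HasDerivAt (myGG l) (-(1/2) * myGG (l+1) x) x := by
  set μ := volume.restrict (Set.Ioi (0:ℝ))
  set F : ℝ → ℝ → ℝ := fun y w => w ^ (l-1) * Real.exp (-(y*w + w⁻¹)/2) with hF
  set F' : ℝ → ℝ → ℝ := fun y w => -(1/2) * (w ^ (l+1-1) * Real.exp (-(y*w + w⁻¹)/2)) with hF'
  set bound : ℝ → ℝ := fun w => (1/2) * (w ^ (l+1-1) * Real.exp (-((x/2)*w + w⁻¹)/2)) with hbd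
  have hε : (0:ℝ) < x/2 := by linarith
  have hmain := hasDerivAt_integral_of_dominated_loc_of_deriv_le (μ := μ) (F := F) (F' := F')
    (bound := bound) (x₀ := x) (Metric.ball_mem_nhds x hε)
    (Filter.Eventually.of_forall fun y => my_aemeas l y)
    (my_integK l x hx)
    ((my_aemeas (l+1) x).const_mul (-(1/2)))
    ?_ ?_ ?_
  · have h1 : HasDerivAt (fun y => ∫ w, F y w ∂μ) (∫ w, F' x w ∂μ) x := hmain.2
    have h2 : (1/2 : ℝ) * (∫ w, F' x w ∂μ) = -(1/2) * myGG (l+1) x := by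
      rw [hF']
      rw [MeasureTheory.integral_const_mul]
      rw [myGG]
      ring
    have := h1.const_mul (1/2 : ℝ)
    rw [h2] at this
    exact this
  · -- bound
    rw [ae_restrict_iff' measurableSet_Ioi]
    apply Filter.Eventually.of_forall
    intro w hw y hy
    rw [Set.mem_Ioi] at hw
    rw [Metric.mem_ball, Real.dist_eq, abs_lt] at hy
    have hy2 : x/2 < y := by linarith
    have hA : (0:ℝ) ≤ w ^ (l+1-1) * Real.exp (-(y*w + w⁻¹)/2) := by positivity
    rw [hF', Real.norm_eq_abs, abs_of_nonpos (by nlinarith), hbd]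
    simp only [neg_mul, neg_neg]
    apply mul_le_mul_of_nonneg_left _ (by norm_num)
    apply mul_le_mul_of_nonneg_left _ (Real.rpow_nonneg hw.le _)
    apply Real.exp_le_exp.mpr
    have : (x/2)*w ≤ y*w := mul_le_mul_of_nonneg_right hy2.le hw.le
    linarith
  · -- bound integrable
    exact (my_integK (l+1) (x/2) hε).const_mul (1/2)
  · -- differentiability
    rw [ae_restrict_iff' measurableSet_Ioi]
    apply Filter.Eventually.of_forall
    intro w hw y hy
    rw [Set.mem_Ioi] at hw
    have hd : HasDerivAt (fun y : ℝ => -(y*w + w⁻¹)/2) (-w/2) y := by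
      have : HasDerivAt (fun y : ℝ => y*w + w⁻¹) w y :=
        (hasDerivAt_id y).mul_const w |>.add_const _ |>.congr_deriv (by ring)
      simpa using ((this.neg).div_const 2)
    have hder := ((hd.exp).const_mul (w ^ (l-1)))
    have hgoal : F' y w = w ^ (l-1) * (Real.exp (-(y*w + w⁻¹)/2) * (-w/2)) := by
      simp only [hF']
      rw [show l+1-1 = (l-1) + 1 by ring, Real.rpow_add_one (ne_of_gt hw)]
      ring
    rw [hgoal]
    exact hder

lemma my_key (l : ℝ) (k : ℕ) :
    ∀ x : ℝ, 0 < x →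
      iteratedDeriv k (fun x : ℝ => besselK l (Real.sqrt x) / x ^ (l/2)) x
        = (-(1/2) : ℝ) ^ k * myGG (l + k) x := by
  induction k with
  | zero =>
    intro x hx
    simp only [iteratedDeriv_zero, pow_zero, Nat.cast_zero, add_zero, one_mul]
    rw [my_gg_eq l x hx]
  | succ k ih =>
    intro x hx
    rw [iteratedDeriv_succ]
    have heq : iteratedDeriv k (fun x : ℝ => besselK l (Real.sqrt x) / x ^ (l/2))
        =ᶠ[nhds x] fun y => (-(1/2) : ℝ) ^ k * myGG (l + k) y := by
      filter_upwards [isOpen_Ioi.mem_nhds (Set.mem_Ioi.mpr hx)] with y hy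
      exact ih y hy
    rw [heq.deriv_eq]
    have hd := (my_hasDerivAt_gg (l + k) x hx).const_mul ((-(1/2) : ℝ) ^ k)
    rw [hd.deriv]
    rw [show l + (k:ℝ) + 1 = l + ((k+1:ℕ):ℝ) by push_cast; ring, pow_succ]
    ring

theorem zeta_iteratedDeriv (phi : ℝ) (k : ℕ) (x : ℝ) (hx : 0 < x) :
    iteratedDeriv k (fun x : ℝ => besselK phi (Real.sqrt x) / x ^ (phi/2)) x
      = (-(1/2) : ℝ) ^ k * besselK (phi + k) (Real.sqrt x) / x ^ ((phi + k)/2) := by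
  rw [my_key phi k x hx, my_gg_eq (phi + k) x hx]
  ring
end

section
/- For $k \in \mathbb{N}$, the $k$-th derivative of the function $x \mapsto K_\phi(\sqrt{x})/x^{\phi/2}$ at a point $x > 0$ can be expressed as $\chi^{(k)}(x) := (-1)^k \frac{\partial^k}{\partial x^k}\frac{K_\phi(\sqrt{x})}{x^{\phi/2}} = \frac{1}{2^k}\, \frac{K_{\phi+k}(\sqrt{x})}{x^{(\phi+k)/2}}$, which is strictly positive; hence $x \mapsto K_\phi(\sqrt{x})/x^{\phi/2}$ is completely monotone on $(0,\infty)$. -/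
open MeasureTheory Real Set

open Nat in
lemma ZetaCM.pow_le_factorial_mul_exp (n : ℕ) {y : ℝ} (hy : 0 ≤ y) :
    y ^ n ≤ (n ! : ℝ) * Real.exp y := by
  have h1 : y ^ n / (n ! : ℝ) ≤ ∑ i ∈ Finset.range (n+1), y ^ i / i ! :=
    Finset.single_le_sum (f := fun i => y ^ i / (i ! : ℝ))
      (fun i _ => by positivity) (Finset.self_mem_range_succ n)
  have h2 := Real.sum_le_exp_of_nonneg hy (n+1)
  have hn : (0:ℝ) < (n ! : ℝ) := by positivity
  rw [div_le_iff₀ hn] at h1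
  calc y ^ n ≤ (∑ i ∈ Finset.range (n+1), y ^ i / i !) * n ! := h1
    _ ≤ Real.exp y * n ! := by gcongr
    _ = (n ! : ℝ) * Real.exp y := mul_comm _ _

open Nat in
lemma ZetaCM.key_pow_exp (n : ℕ) {b t : ℝ} (hb : 0 < b) (ht : 0 ≤ t) :
    t ^ n * Real.exp (-(b*t)) ≤ (n ! : ℝ) * b⁻¹ ^ n := by
  have h := ZetaCM.pow_le_factorial_mul_exp n (mul_nonneg hb.le ht)
  rw [mul_pow] at h
  have hexp : (0:ℝ) < Real.exp (b*t) := Real.exp_pos _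
  have hbn : (0:ℝ) < b ^ n := pow_pos hb n
  rw [Real.exp_neg, inv_pow, ← div_eq_mul_inv, ← div_eq_mul_inv,
    div_le_div_iff₀ hexp hbn]
  nlinarith [h]

lemma ZetaCM.meas_main (p a c : ℝ) :
    Measurable (fun w : ℝ => w ^ p * Real.exp (-(a*w + c*w⁻¹)/2)) := by
  fun_prop

open Nat in
lemma ZetaCM.integrableOn_main {p a c : ℝ} (ha : 0 < a) (hc : 0 < c) :
    IntegrableOn (fun w : ℝ => w ^ p * Real.exp (-(a*w + c*w⁻¹)/2)) (Ioi 0) := by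
  obtain ⟨n, hn⟩ : ∃ n : ℕ, |p| ≤ n := exists_nat_ge |p|
  have hpn : p ≤ (n:ℝ) := (le_abs_self p).trans hn
  have hnp : -(n:ℝ) ≤ p := by
    have := neg_abs_le p; linarith
  have hmono : ∀ {y z : ℝ}, y ≤ z → Real.exp (-z/2) ≤ Real.exp (-y/2) := by
    intro y z h; apply Real.exp_le_exp.2; linarith
  have hIoc : IntegrableOn (fun w : ℝ => w ^ p * Real.exp (-(a*w + c*w⁻¹)/2)) (Ioc 0 1) := by
    apply Integrable.mono' (g := fun _ => (n ! : ℝ) * (c/2)⁻¹ ^ n)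
    · exact integrableOn_const measure_Ioc_lt_top.ne
    · exact (ZetaCM.meas_main p a c).aestronglyMeasurable
    · rw [ae_restrict_iff' measurableSet_Ioc]
      filter_upwards with w hw
      obtain ⟨hw0, hw1⟩ := hw
      have h0 : ‖w ^ p * Real.exp (-(a*w + c*w⁻¹)/2)‖
          = w ^ p * Real.exp (-(a*w + c*w⁻¹)/2) := by
        rw [Real.norm_eq_abs, abs_of_nonneg]
        positivity
      rw [h0]
      calc w ^ p * Real.exp (-(a*w + c*w⁻¹)/2)
          ≤ w ^ (-(n:ℝ)) * Real.exp (-(c*w⁻¹)/2) := by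
            apply mul_le_mul
            · exact Real.rpow_le_rpow_of_exponent_ge hw0 hw1 hnp
            · exact hmono (le_add_of_nonneg_left (by positivity))
            · positivity
            · positivity
        _ = (w⁻¹) ^ n * Real.exp (-((c/2) * w⁻¹)) := by
            rw [Real.rpow_neg hw0.le, Real.rpow_natCast, ← inv_pow]
            ring_nf
        _ ≤ (n ! : ℝ) * (c/2)⁻¹ ^ n :=
            ZetaCM.key_pow_exp n (by positivity) (by positivity)
  have hIoi : IntegrableOn (fun w : ℝ => w ^ p * Real.exp (-(a*w + c*w⁻¹)/2)) (Ioi 1) := by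
    apply Integrable.mono'
      (g := fun w => ((n ! : ℝ) * (a/4)⁻¹ ^ n) * Real.exp (-(a/4) * w))
    · exact ((exp_neg_integrableOn_Ioi 1 (by positivity)).const_mul _)
    · exact (ZetaCM.meas_main p a c).aestronglyMeasurable
    · rw [ae_restrict_iff' measurableSet_Ioi]
      filter_upwards with w hw
      have hw1 : (1:ℝ) ≤ w := le_of_lt hw
      have hw0 : (0:ℝ) < w := lt_of_lt_of_le one_pos hw1
      have h0 : ‖w ^ p * Real.exp (-(a*w + c*w⁻¹)/2)‖
          = w ^ p * Real.exp (-(a*w + c*w⁻¹)/2) := by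
        rw [Real.norm_eq_abs, abs_of_nonneg]; positivity
      rw [h0]
      calc w ^ p * Real.exp (-(a*w + c*w⁻¹)/2)
          ≤ w ^ (n:ℝ) * Real.exp (-(a*w)/2) := by
            apply mul_le_mul
            · exact Real.rpow_le_rpow_of_exponent_le hw1 hpn
            · exact hmono (le_add_of_nonneg_right (by positivity))
            · positivity
            · positivity
        _ = (w ^ n * Real.exp (-((a/4) * w))) * Real.exp (-(a/4) * w) := by
            rw [Real.rpow_natCast, mul_assoc, ← Real.exp_add]
            ring_nf
        _ ≤ ((n ! : ℝ) * (a/4)⁻¹ ^ n) * Real.exp (-(a/4) * w) := by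
            apply mul_le_mul_of_nonneg_right
              (ZetaCM.key_pow_exp n (by positivity) hw0.le) (Real.exp_pos _).le
  have := hIoc.union hIoi
  rwa [Ioc_union_Ioi_eq_Ioi zero_le_one] at this

noncomputable def ZetaCM.GG (m x : ℝ) : ℝ :=
  (1/2) * ∫ w in Set.Ioi (0:ℝ), w ^ (-m - 1) * Real.exp (-(x*w + w⁻¹)/2)

namespace ZetaCM

lemma besselK_eq (l t : ℝ) :
    besselK l t = (1/2) * ∫ u in Set.Ioi (0:ℝ),
      u ^ (l - 1) * Real.exp (-(t*u + t*u⁻¹)/2) := by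
  unfold besselK
  congr 1
  apply setIntegral_congr_fun measurableSet_Ioi
  intro u _
  ring_nf

lemma besselK_pos (l : ℝ) {t : ℝ} (ht : 0 < t) : 0 < besselK l t := by
  rw [besselK_eq]
  have hint : IntegrableOn
      (fun u : ℝ => u ^ (l-1) * Real.exp (-(t*u + t*u⁻¹)/2)) (Ioi 0) :=
    integrableOn_main ht ht
  have hpos : 0 < ∫ u in Set.Ioi (0:ℝ),
      u ^ (l - 1) * Real.exp (-(t*u + t*u⁻¹)/2) := by
    rw [setIntegral_pos_iff_support_of_nonneg_ae ?_ hint]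
    · have : (Ioi (0:ℝ)) ⊆ Function.support
          (fun u : ℝ => u ^ (l-1) * Real.exp (-(t*u + t*u⁻¹)/2)) ∩ Ioi 0 := by
        intro u hu
        refine ⟨?_, hu⟩
        have hu0 : 0 < u := hu
        have : 0 < u ^ (l-1) * Real.exp (-(t*u + t*u⁻¹)/2) := by positivity
        exact ne_of_gt this
      calc (0:ENNReal) < volume (Ioi (0:ℝ)) := by simp
        _ ≤ _ := measure_mono this
    · filter_upwards [ae_restrict_mem measurableSet_Ioi] with u hu
      have hu0 : 0 < u := hu
      show (0:ℝ) ≤ _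
      positivity
  linarith

lemma besselK_neg (l t : ℝ) : besselK (-l) t = besselK l t := by
  unfold besselK
  congr 1
  have h := integral_comp_rpow_Ioi
    (fun u => u ^ (l-1) * Real.exp (-(t/2) * (u + u⁻¹))) (p := -1) (by norm_num)
  rw [← h]
  apply setIntegral_congr_fun measurableSet_Ioi
  intro u hu
  have hu0 : 0 < u := hu
  simp only [smul_eq_mul, abs_neg, abs_one]
  rw [Real.rpow_neg_one, inv_inv, Real.inv_rpow hu0.le, ← Real.rpow_neg hu0.le]
  rw [show (1:ℝ) * u ^ (-1 - 1 : ℝ) * (u ^ (-(l-1)) * Real.exp (-(t/2) * (u⁻¹ + u)))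
      = (u ^ (-1-1:ℝ) * u ^ (-(l-1))) * Real.exp (-(t/2) * (u + u⁻¹)) by
    rw [add_comm u⁻¹ u]; ring]
  rw [← Real.rpow_add hu0]
  norm_num
  ring_nf

lemma GG_eq (l : ℝ) {x : ℝ} (hx : 0 < x) :
    GG l x = x ^ (l/2) * besselK l (Real.sqrt x) := by
  have hs : 0 < Real.sqrt x := Real.sqrt_pos.2 hx
  have hss : Real.sqrt x * Real.sqrt x = x := Real.mul_self_sqrt hx.le
  have h := integral_comp_mul_left_Ioi
    (fun v => v ^ (-l - 1) * Real.exp (-(Real.sqrt x/2) * (v + v⁻¹))) 0 hs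
  rw [mul_zero, smul_eq_mul] at h
  have hL : (∫ w in Set.Ioi (0:ℝ),
        (Real.sqrt x * w) ^ (-l - 1) *
          Real.exp (-(Real.sqrt x/2) * (Real.sqrt x * w + (Real.sqrt x * w)⁻¹)))
      = (Real.sqrt x) ^ (-l - 1) *
        ∫ w in Set.Ioi (0:ℝ), w ^ (-l - 1) * Real.exp (-(x*w + w⁻¹)/2) := by
    rw [← integral_const_mul]
    apply setIntegral_congr_fun measurableSet_Ioi
    intro w hw
    have hw0 : 0 < w := hw
    dsimp only
    rw [Real.mul_rpow hs.le hw0.le, mul_inv]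
    rw [show -(Real.sqrt x/2) * (Real.sqrt x * w + (Real.sqrt x)⁻¹ * w⁻¹)
        = -((Real.sqrt x * Real.sqrt x) * w
            + (Real.sqrt x * (Real.sqrt x)⁻¹) * w⁻¹)/2 by ring]
    rw [hss, mul_inv_cancel₀ hs.ne', one_mul]
    ring
  beta_reduce at h
  rw [hL] at h
  have hbes : (∫ v in Set.Ioi (0:ℝ),
      v ^ (-l - 1) * Real.exp (-(Real.sqrt x/2) * (v + v⁻¹)))
      = 2 * besselK (-l) (Real.sqrt x) := by
    rw [besselK]
    ring
  rw [hbes] at h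
  have hml : (Real.sqrt x) ^ (l+1) * (Real.sqrt x) ^ (-l - 1) = 1 := by
    rw [← Real.rpow_add hs]
    norm_num
  have hI : (∫ w in Set.Ioi (0:ℝ), w ^ (-l - 1) * Real.exp (-(x*w + w⁻¹)/2))
      = (Real.sqrt x) ^ (l+1) * ((Real.sqrt x)⁻¹ * (2 * besselK (-l) (Real.sqrt x))) := by
    rw [← h, ← mul_assoc, hml, one_mul]
  have hsl : (Real.sqrt x) ^ (l+1) * (Real.sqrt x)⁻¹ = x ^ (l/2) := by
    rw [Real.rpow_add_one hs.ne' l, mul_assoc, mul_inv_cancel₀ hs.ne', mul_one,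
      Real.sqrt_eq_rpow, ← Real.rpow_mul hx.le]
    congr 1
    ring
  rw [GG, hI, besselK_neg]
  linear_combination besselK l (Real.sqrt x) * hsl

lemma meas_main' (p x : ℝ) :
    Measurable (fun w : ℝ => w ^ p * Real.exp (-(x*w + w⁻¹)/2)) := by fun_prop

lemma integrableOn_main' {p x : ℝ} (hx : 0 < x) :
    IntegrableOn (fun w : ℝ => w ^ p * Real.exp (-(x*w + w⁻¹)/2)) (Ioi 0) := by
  have h := integrableOn_main (p := p) hx one_pos
  simpa using h

lemma hasDerivAt_GG (m : ℝ) {x : ℝ} (hx : 0 < x) :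
    HasDerivAt (GG m) (-(1/2) * GG (m-1) x) x := by
  set μ := volume.restrict (Ioi (0:ℝ))
  set F : ℝ → ℝ → ℝ := fun y w => w ^ (-m - 1) * Real.exp (-(y*w + w⁻¹)/2)
  set F' : ℝ → ℝ → ℝ := fun y w =>
    -(1/2) * (w ^ (-(m-1) - 1) * Real.exp (-(y*w + w⁻¹)/2))
  have hε : (0:ℝ) < x/2 := by linarith
  have hbound : Integrable
      (fun w : ℝ => (1/2) * (w ^ (-(m-1)-1) * Real.exp (-((x/2)*w + w⁻¹)/2))) μ :=
    ((integrableOn_main' (p := -(m-1)-1) hε).const_mul _)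
  have key := hasDerivAt_integral_of_dominated_loc_of_deriv_le
    (F := F) (F' := F') (x₀ := x) (s := Metric.ball x (x/2))
    (bound := fun w => (1/2) * (w ^ (-(m-1)-1) * Real.exp (-((x/2)*w + w⁻¹)/2)))
    (Metric.ball_mem_nhds x hε)
    (Filter.Eventually.of_forall fun y => ((meas_main' (-m-1) y).aestronglyMeasurable))
    (integrableOn_main' hx)
    (by
      apply Measurable.aestronglyMeasurable
      fun_prop)
    (by
      rw [ae_restrict_iff' measurableSet_Ioi]
      filter_upwards with w hw
      intro y hy
      have hw0 : 0 < w := hw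
      have hy2 : x/2 ≤ y := by
        have := abs_lt.1 (mem_ball_iff_norm.1 hy)
        linarith [this.1]
      have hnorm : ‖F' y w‖
          = (1/2) * (w ^ (-(m-1)-1) * Real.exp (-(y*w + w⁻¹)/2)) := by
        rw [Real.norm_eq_abs]
        rw [show F' y w = -((1/2) * (w ^ (-(m-1)-1) * Real.exp (-(y*w + w⁻¹)/2))) by
          simp only [F']; ring]
        rw [abs_neg, abs_of_nonneg (by positivity)]
      rw [hnorm]
      have hexp : Real.exp (-(y*w + w⁻¹)/2) ≤ Real.exp (-((x/2)*w + w⁻¹)/2) := by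
        apply Real.exp_le_exp.2
        have : (x/2)*w ≤ y*w := mul_le_mul_of_nonneg_right hy2 hw0.le
        linarith
      have hrp : (0:ℝ) ≤ w ^ (-(m-1)-1) := (Real.rpow_pos_of_pos hw0 _).le
      nlinarith)
    hbound
    (by
      rw [ae_restrict_iff' measurableSet_Ioi]
      filter_upwards with w hw
      intro y hy
      have hw0 : 0 < w := hw
      have hg : HasDerivAt (fun z : ℝ => -(z*w + w⁻¹)/2) (-w/2) y := by
        have h1 : HasDerivAt (fun z : ℝ => z*w + w⁻¹) w y :=
          (hasDerivAt_mul_const w).add_const _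
        simpa using (h1.neg.div_const 2)
      have h2 : HasDerivAt (fun z : ℝ => w ^ (-m-1) * Real.exp (-(z*w + w⁻¹)/2))
          (w ^ (-m-1) * (Real.exp (-(y*w + w⁻¹)/2) * (-w/2))) y :=
        (hg.exp).const_mul _
      convert h2 using 1
      show -(1/2) * (w ^ (-(m-1) - 1) * Real.exp (-(y*w + w⁻¹)/2)) = _
      rw [show -(m-1)-1 = (-m-1) + 1 by ring, Real.rpow_add hw0, Real.rpow_one]
      ring
      all_goals rfl)
  obtain ⟨-, hderiv⟩ := key
  have h3 : (∫ w, F' x w ∂μ)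
      = -(1/2) * ∫ w in Set.Ioi (0:ℝ), w ^ (-(m-1)-1) * Real.exp (-(x*w + w⁻¹)/2) :=
    integral_const_mul _ _
  rw [h3] at hderiv
  have h4 : HasDerivAt (fun y => (1/2 : ℝ) * ∫ w, F y w ∂μ)
      ((1/2 : ℝ) * (-(1/2) * ∫ w in Set.Ioi (0:ℝ),
        w ^ (-(m-1)-1) * Real.exp (-(x*w + w⁻¹)/2))) x := hderiv.const_mul _
  rw [show GG m = fun y => (1/2 : ℝ) * ∫ w, F y w ∂μ from rfl]
  convert h4 using 1
  rw [GG]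
  ring

end ZetaCM

open ZetaCM

theorem zeta_completely_monotone (phi : ℝ) :
    (∀ (k : ℕ) (x : ℝ), 0 < x →
      (-1 : ℝ) ^ k *
        iteratedDeriv k (fun x : ℝ => besselK phi (Real.sqrt x) / x ^ (phi/2)) x
        = (1 / 2 ^ k) * besselK (phi + k) (Real.sqrt x) / x ^ ((phi + k)/2)) ∧
    (∀ (k : ℕ) (x : ℝ), 0 < x →
      0 < (-1 : ℝ) ^ k *
        iteratedDeriv k (fun x : ℝ => besselK phi (Real.sqrt x) / x ^ (phi/2)) x) := by
  have key : ∀ (k : ℕ) (x : ℝ), 0 < x →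
      iteratedDeriv k (fun x : ℝ => besselK phi (Real.sqrt x) / x ^ (phi/2)) x
        = (-(1:ℝ)/2)^k * GG (-phi - k) x := by
    intro k
    induction k with
    | zero =>
      intro x hx
      rw [iteratedDeriv_zero]
      simp only [pow_zero, Nat.cast_zero, sub_zero, one_mul]
      rw [GG_eq _ hx, besselK_neg, neg_div, Real.rpow_neg hx.le, div_eq_mul_inv]
      ring
    | succ k ih =>
      intro x hx
      rw [iteratedDeriv_succ]
      have hev : iteratedDeriv k (fun x : ℝ => besselK phi (Real.sqrt x) / x ^ (phi/2))
          =ᶠ[nhds x] fun y => (-(1:ℝ)/2)^k * GG (-phi - k) y := by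
        filter_upwards [Ioi_mem_nhds hx] with y hy
        exact ih y hy
      rw [hev.deriv_eq]
      have hd : HasDerivAt (fun y => (-(1:ℝ)/2)^k * GG (-phi - k) y)
          ((-(1:ℝ)/2)^k * (-(1/2) * GG (-phi - (k:ℝ) - 1) x)) x :=
        (hasDerivAt_GG _ hx).const_mul _
      rw [hd.deriv]
      have harg : -phi - (k:ℝ) - 1 = -phi - ((k+1 : ℕ):ℝ) := by push_cast; ring
      rw [harg]
      ring
  have h1 : ∀ (k : ℕ) (x : ℝ), 0 < x →
      (-1 : ℝ) ^ k *
        iteratedDeriv k (fun x : ℝ => besselK phi (Real.sqrt x) / x ^ (phi/2)) x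
        = (1 / 2 ^ k) * besselK (phi + k) (Real.sqrt x) / x ^ ((phi + k)/2) := by
    intro k x hx
    rw [key k x hx]
    have harg : -phi - (k:ℝ) = -(phi + k) := by ring
    rw [harg, GG_eq _ hx, besselK_neg,
      show -(phi + (k:ℝ))/2 = -((phi + (k:ℝ))/2) by ring, Real.rpow_neg hx.le]
    have hxp : (0:ℝ) < x ^ ((phi + (k:ℝ))/2) := Real.rpow_pos_of_pos hx _
    have hpow : (-1 : ℝ)^k * (-(1:ℝ)/2)^k = (2⁻¹ : ℝ)^k := by
      rw [← mul_pow]; norm_num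
    rw [← mul_assoc, hpow, inv_pow, ← one_div]
    rw [div_eq_mul_inv]
    ring
  refine ⟨h1, fun k x hx => ?_⟩
  rw [h1 k x hx]
  have hb := besselK_pos (phi + k) (Real.sqrt_pos.2 hx)
  have hxp : (0:ℝ) < x ^ ((phi + (k:ℝ))/2) := Real.rpow_pos_of_pos hx _
  positivity
end
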